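/- arXiv:1906.04209 — 2 statements merged into one kernel-verified Lean document; each statement's English description precedes it below -/
import Mathlib

section
/- For $0 < t_1 < t_2$ with $t_2 < \pi$, and $n = 0$: $\frac{1}{\pi}\int_0^\pi \log\left(\frac{2}{\sqrt{2(1 - \cos t_1 \cos t_2 - \sin t_1 \sin t_2 \cos\theta)}}\right) d\theta = -\log\left(\cos(t_1/2)\sin(t_2/2)\right)$. -/
open Real intervalIntegral MeasureTheory

private lemma hasSum_log_aux {r : ℝ} (hr0 : 0 ≤ r) (hr1 : r < 1) (θ : ℝ) :
    HasSum (fun n : ℕ => r ^ n * Real.cos (n * θ) / n)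
      (-(1/2) * Real.log (1 - 2*r*Real.cos θ + r^2)) := by
  set z : ℂ := (r : ℂ) * Complex.exp (θ * Complex.I) with hzdef
  have hz : ‖z‖ < 1 := by
    simp only [hzdef, norm_mul, Complex.norm_real, Real.norm_eq_abs,
      Complex.norm_exp_ofReal_mul_I, mul_one, abs_of_nonneg hr0]
    exact hr1
  have H := Complex.hasSum_re (Complex.hasSum_taylorSeries_neg_log hz)
  have hterm : ∀ n : ℕ, (z ^ n / n).re = r ^ n * Real.cos (n * θ) / n := by
    intro n
    have hzn : z ^ n = ((r ^ n : ℝ) : ℂ) * Complex.exp ((n * θ : ℝ) * Complex.I) := by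
      rw [hzdef, mul_pow, ← Complex.exp_nat_mul]
      push_cast
      ring_nf
    rw [hzn, Complex.div_natCast_re, Complex.re_ofReal_mul, Complex.exp_ofReal_mul_I_re]
  have hQnn : (0:ℝ) ≤ 1 - 2*r*Real.cos θ + r^2 := by
    nlinarith [Real.cos_le_one θ, Real.neg_one_le_cos θ]
  have habs : ‖1 - z‖ = Real.sqrt (1 - 2*r*Real.cos θ + r^2) := by
    rw [Complex.norm_def]
    congr 1
    rw [Complex.normSq_apply]
    simp only [hzdef, Complex.sub_re, Complex.sub_im, Complex.one_re, Complex.one_im,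
      Complex.re_ofReal_mul, Complex.im_ofReal_mul, Complex.exp_ofReal_mul_I_re,
      Complex.exp_ofReal_mul_I_im]
    nlinarith [Real.sin_sq_add_cos_sq θ]
  have hval : (-Complex.log (1 - z)).re = -(1/2) * Real.log (1 - 2*r*Real.cos θ + r^2) := by
    rw [Complex.neg_re, Complex.log_re, habs, Real.log_sqrt hQnn]
    ring
  rw [show (fun n : ℕ => (z ^ n / (n:ℂ)).re) = fun n : ℕ => r ^ n * Real.cos (n * θ) / n from
    funext hterm, hval] at H
  exact H

private lemma integral_log_kernel {r : ℝ} (hr0 : 0 ≤ r) (hr1 : r < 1) :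
    ∫ θ in (0:ℝ)..π, Real.log (1 - 2*r*Real.cos θ + r^2) = 0 := by
  set μ := volume.restrict (Set.Ioc (0:ℝ) π) with hμ
  set f : ℕ → ℝ → ℝ := fun n θ => r ^ n * Real.cos (n * θ) / n with hf
  have hcont : ∀ n, Continuous (f n) := by
    intro n
    exact ((continuous_const.mul (Real.continuous_cos.comp (continuous_const.mul continuous_id))).div_const _)
  have hint : ∀ n, Integrable (f n) μ := by
    intro n
    exact (hcont n).integrableOn_Ioc
  have hbound : ∀ n θ, ‖f n θ‖ ≤ r ^ n := by
    intro n θ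
    rcases Nat.eq_zero_or_pos n with rfl | hn
    · simp [hf]
    · have h1 : (1:ℝ) ≤ n := by exact_mod_cast hn
      rw [hf]
      simp only [Real.norm_eq_abs, abs_div, abs_mul, abs_pow, abs_of_nonneg hr0]
      rw [div_le_iff₀ (by positivity)]
      have := abs_cos_le_one ((n:ℝ) * θ)
      have h2 : |(n:ℝ)| = (n:ℝ) := abs_of_nonneg (by positivity)
      nlinarith [pow_nonneg hr0 n, abs_nonneg (Real.cos ((n:ℝ)*θ))]
  have hnormint : ∀ n, ∫ θ, ‖f n θ‖ ∂μ ≤ π * r ^ n := by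
    intro n
    calc ∫ θ, ‖f n θ‖ ∂μ ≤ ∫ _θ, r ^ n ∂μ :=
          integral_mono (hint n).norm (integrable_const _) (fun θ => hbound n θ)
      _ = π * r ^ n := by
          simp [hμ, Real.volume_Ioc, ENNReal.toReal_ofReal Real.pi_pos.le, pi_nonneg]
  have hsum : Summable fun n => ∫ θ, ‖f n θ‖ ∂μ := by
    refine Summable.of_nonneg_of_le (fun n => integral_nonneg fun θ => norm_nonneg _)
      hnormint ?_
    exact (summable_geometric_of_lt_one hr0 hr1).mul_left π
  have H := hasSum_integral_of_summable_integral_norm hint hsum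
  have htsum : ∀ θ, (∑' n, f n θ) = -(1/2) * Real.log (1 - 2*r*Real.cos θ + r^2) :=
    fun θ => (hasSum_log_aux hr0 hr1 θ).tsum_eq
  have hzero : ∀ n, ∫ θ, f n θ ∂μ = 0 := by
    intro n
    have : ∫ θ, f n θ ∂μ = ∫ θ in (0:ℝ)..π, f n θ := (integral_of_le pi_nonneg).symm
    rw [this]
    rcases Nat.eq_zero_or_pos n with rfl | hn
    · simp [hf]
    · have hne : (n:ℝ) ≠ 0 := by positivity
      have : ∫ θ in (0:ℝ)..π, f n θ = (r ^ n / n) * ∫ θ in (0:ℝ)..π, Real.cos ((n:ℝ) * θ) := by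
        rw [← intervalIntegral.integral_const_mul]
        congr 1 with θ
        rw [hf]; ring
      rw [this, intervalIntegral.integral_comp_mul_left Real.cos hne]
      simp [Real.sin_nat_mul_pi]
  rw [show (fun n => ∫ θ, f n θ ∂μ) = fun _ => (0:ℝ) from funext hzero] at H
  have h0 : (∫ θ, (∑' n, f n θ) ∂μ) = 0 := (hasSum_zero.unique H).symm
  have : ∫ θ, (∑' n, f n θ) ∂μ
      = -(1/2) * ∫ θ, Real.log (1 - 2*r*Real.cos θ + r^2) ∂μ := by
    rw [← MeasureTheory.integral_const_mul]
    exact integral_congr_ae (Filter.Eventually.of_forall fun θ => htsum θ)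
  rw [this] at h0
  have := (mul_eq_zero.mp h0).resolve_left (by norm_num)
  rw [integral_of_le pi_nonneg]
  exact this

/-- The `n = 0` azimuthal Fourier mode of the kernel `log (2/|x-x'|)` on the sphere. -/
theorem log_kernel_mode_zero (t₁ t₂ : ℝ) (h0 : 0 < t₁) (h12 : t₁ < t₂) (h2 : t₂ < π) :
    (1 / π) * ∫ θ in (0:ℝ)..π,
        Real.log (2 / Real.sqrt (2 * (1 - Real.cos t₁ * Real.cos t₂
          - Real.sin t₁ * Real.sin t₂ * Real.cos θ)))
      = -Real.log (Real.cos (t₁ / 2) * Real.sin (t₂ / 2)) := by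
  set a := Real.cos (t₁ / 2) with ha
  set s := Real.sin (t₁ / 2) with hs
  set b := Real.sin (t₂ / 2) with hb
  set c := Real.cos (t₂ / 2) with hc
  clear_value a s b c
  have hapos : 0 < a := by
    rw [ha]; exact Real.cos_pos_of_mem_Ioo ⟨by linarith [Real.pi_pos], by linarith⟩
  have hspos : 0 < s := by
    rw [hs]; exact Real.sin_pos_of_pos_of_lt_pi (by linarith) (by linarith [Real.pi_pos])
  have hbpos : 0 < b := by
    rw [hb]; exact Real.sin_pos_of_pos_of_lt_pi (by linarith) (by linarith [Real.pi_pos])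
  have hcpos : 0 < c := by
    rw [hc]; exact Real.cos_pos_of_mem_Ioo ⟨by linarith [Real.pi_pos], by linarith⟩
  obtain ⟨r, hr⟩ : ∃ r : ℝ, r = s * c / (a * b) := ⟨_, rfl⟩
  have hr0 : 0 ≤ r := by rw [hr]; positivity
  have hdiff : 0 < a * b - s * c := by
    have : a * b - s * c = Real.sin (t₂ / 2 - t₁ / 2) := by
      rw [Real.sin_sub, ← ha, ← hb, ← hc, ← hs]; ring
    rw [this]
    exact Real.sin_pos_of_pos_of_lt_pi (by linarith) (by linarith [Real.pi_pos])
  have hr1 : r < 1 := by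
    rw [hr, div_lt_one (by positivity)]
    linarith
  -- trig identities
  have hsa : Real.sin t₁ = 2 * s * a := by
    have h := Real.sin_two_mul (t₁ / 2)
    rw [show 2 * (t₁ / 2) = t₁ by ring] at h
    rw [hs, ha, h]
  have hbc : Real.sin t₂ = 2 * b * c := by
    have h := Real.sin_two_mul (t₂ / 2)
    rw [show 2 * (t₂ / 2) = t₂ by ring] at h
    rw [hb, hc, h]
  have hca : Real.cos t₁ = 1 - 2 * s ^ 2 := by
    have h := Real.cos_two_mul (t₁ / 2)
    rw [show 2 * (t₁ / 2) = t₁ by ring] at h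
    rw [hs, h]; nlinarith [Real.sin_sq_add_cos_sq (t₁ / 2)]
  have hcb : Real.cos t₂ = 1 - 2 * b ^ 2 := by
    have h := Real.cos_two_mul (t₂ / 2)
    rw [show 2 * (t₂ / 2) = t₂ by ring] at h
    rw [hb, h]; nlinarith [Real.sin_sq_add_cos_sq (t₂ / 2)]
  have hpyth1 : a ^ 2 + s ^ 2 = 1 := by
    have := Real.sin_sq_add_cos_sq (t₁ / 2); rw [ha, hs]; linarith
  have hpyth2 : b ^ 2 + c ^ 2 = 1 := by
    have := Real.sin_sq_add_cos_sq (t₂ / 2); rw [hb, hc]; linarith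
  have hQpos : ∀ θ : ℝ, 0 < 1 - 2*r*Real.cos θ + r^2 := by
    intro θ
    have h1 : 0 < (1 - r)^2 := pow_pos (by linarith) 2
    nlinarith [h1, mul_nonneg hr0 (sub_nonneg.2 (Real.cos_le_one θ))]
  have hfact : ∀ θ : ℝ, 2 * (1 - Real.cos t₁ * Real.cos t₂ - Real.sin t₁ * Real.sin t₂ * Real.cos θ)
      = (2 * a * b) ^ 2 * (1 - 2*r*Real.cos θ + r^2) := by
    intro θ
    have key : (2*a*b)^2 * (1 - 2*r*Real.cos θ + r^2)
        = 4*a^2*b^2 - 8*a*b*s*c*Real.cos θ + 4*s^2*c^2 := by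
      have ha0 : a ≠ 0 := hapos.ne'
      have hb0 : b ≠ 0 := hbpos.ne'
      rw [hr]; field_simp; ring
    rw [key, hsa, hbc, hca, hcb]
    linear_combination (-4*b^2)*hpyth1 + (-4*s^2)*hpyth2
  have hpt : ∀ θ : ℝ,
      Real.log (2 / Real.sqrt (2 * (1 - Real.cos t₁ * Real.cos t₂
          - Real.sin t₁ * Real.sin t₂ * Real.cos θ)))
      = -Real.log (a * b) - (1/2) * Real.log (1 - 2*r*Real.cos θ + r^2) := by
    intro θ
    rw [hfact θ]
    have hQ := hQpos θ
    have hsqrt : Real.sqrt ((2 * a * b) ^ 2 * (1 - 2*r*Real.cos θ + r^2))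
        = (2 * a * b) * Real.sqrt (1 - 2*r*Real.cos θ + r^2) := by
      rw [Real.sqrt_mul (by positivity), Real.sqrt_sq (by positivity)]
    rw [hsqrt]
    have hsq : 0 < Real.sqrt (1 - 2*r*Real.cos θ + r^2) := Real.sqrt_pos.mpr hQ
    rw [Real.log_div (by norm_num) (by positivity), Real.log_mul (by positivity) (by positivity),
      Real.log_mul (by positivity) (by positivity), Real.log_sqrt hQ.le]
    have h2 : Real.log (2 * a) = Real.log 2 + Real.log a :=
      Real.log_mul (by norm_num) (by positivity)
    have h3 : Real.log (a * b) = Real.log a + Real.log b :=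
      Real.log_mul (by positivity) (by positivity)
    rw [h2, h3]
    ring
  have hIcont : IntervalIntegrable
      (fun θ => Real.log (1 - 2*r*Real.cos θ + r^2)) volume 0 π := by
    apply Continuous.intervalIntegrable
    exact ((continuous_const.sub (continuous_const.mul Real.continuous_cos)).add continuous_const).log
      (fun θ => (hQpos θ).ne')
  have hint : (∫ θ in (0:ℝ)..π,
        Real.log (2 / Real.sqrt (2 * (1 - Real.cos t₁ * Real.cos t₂
          - Real.sin t₁ * Real.sin t₂ * Real.cos θ))))
      = π * (-Real.log (a * b)) := by
    rw [intervalIntegral.integral_congr (g := fun θ =>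
        -Real.log (a * b) - (1/2) * Real.log (1 - 2*r*Real.cos θ + r^2))
        (fun θ _ => hpt θ)]
    rw [intervalIntegral.integral_sub intervalIntegrable_const (hIcont.const_mul _),
      intervalIntegral.integral_const_mul, integral_log_kernel hr0 hr1,
      intervalIntegral.integral_const]
    simp
  rw [hint]
  field_simp
end

section
/- For integers $n \ge 1$ and $0 < t_1 < t_2 < \pi$: $\frac{1}{\pi}\int_0^\pi \log\left(\frac{2}{\sqrt{2(1 - \cos t_1\cos t_2 - \sin t_1 \sin t_2\cos\theta)}}\right)\cos(n\theta)\, d\theta = \frac{1}{2n}\left(\tan(t_1/2)\cot(t_2/2)\right)^n$. -/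
open Real intervalIntegral MeasureTheory

lemma int_cos_int (m : ℤ) (hm : m ≠ 0) : ∫ θ in (0:ℝ)..π, Real.cos (m * θ) = 0 := by
  have hc : (m:ℝ) ≠ 0 := Int.cast_ne_zero.mpr hm
  rw [intervalIntegral.integral_comp_mul_left Real.cos hc]
  simp [Real.sin_int_mul_pi]

lemma int_cos_nat (m : ℕ) (hm : m ≠ 0) : ∫ θ in (0:ℝ)..π, Real.cos (m * θ) = 0 := by
  have := int_cos_int (m : ℤ) (by exact_mod_cast hm)
  simpa using this

lemma orth (k n : ℕ) (hn : 1 ≤ n) :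
    ∫ θ in (0:ℝ)..π, Real.cos (k * θ) * Real.cos (n * θ)
      = if k = n then π / 2 else 0 := by
  have hpt : ∀ θ : ℝ, Real.cos (k * θ) * Real.cos (n * θ)
      = (Real.cos ((((k:ℤ) - n : ℤ) : ℝ) * θ) + Real.cos ((((k:ℤ) + n : ℤ) : ℝ) * θ)) / 2 := by
    intro θ
    have h := Real.two_mul_cos_mul_cos ((k:ℝ) * θ) ((n:ℝ) * θ)
    push_cast
    rw [sub_mul, add_mul]
    linarith
  simp_rw [hpt]
  rw [intervalIntegral.integral_div]
  rw [intervalIntegral.integral_add]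
  · rcases eq_or_ne k n with rfl | hkn
    · rw [if_pos rfl, int_cos_int ((k:ℤ) + k) (by omega)]
      simp
    · rw [if_neg hkn, int_cos_int ((k:ℤ) - n) (by omega), int_cos_int ((k:ℤ) + n) (by omega)]
      norm_num
  · exact (Real.continuous_cos.comp (continuous_const.mul continuous_id)).intervalIntegrable _ _
  · exact (Real.continuous_cos.comp (continuous_const.mul continuous_id)).intervalIntegrable _ _

lemma Qpos {r : ℝ} (hr0 : 0 ≤ r) (hr1 : r < 1) (θ : ℝ) :
    0 < 1 - 2 * r * Real.cos θ + r ^ 2 := by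
  nlinarith [Real.cos_le_one θ, Real.neg_one_le_cos θ, sq_nonneg (1 - r), sq_nonneg (1 + r)]

lemma log_Q_eq_tsum {r : ℝ} (hr0 : 0 ≤ r) (hr1 : r < 1) (θ : ℝ) :
    Real.log (1 - 2 * r * Real.cos θ + r ^ 2)
      = ∑' k : ℕ, (-2) * (r ^ k * Real.cos (k * θ) / k) := by
  set z : ℂ := r * Complex.exp (θ * Complex.I) with hz
  have hznorm : ‖z‖ < 1 := by
    rw [hz]
    simp only [norm_mul, Complex.norm_real, Complex.norm_exp_ofReal_mul_I, mul_one]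
    simpa [abs_of_nonneg hr0] using hr1
  have hs := Complex.hasSum_taylorSeries_neg_log hznorm
  have hre := Complex.reCLM.hasSum hs
  have hterm : ∀ k : ℕ, Complex.reCLM (z ^ k / k) = r ^ k * Real.cos (k * θ) / k := by
    intro k
    have hzk : z ^ k = ((r ^ k : ℝ) : ℂ) * Complex.exp ((k * θ : ℝ) * Complex.I) := by
      rw [hz, mul_pow, ← Complex.exp_nat_mul]
      push_cast
      ring_nf
    have h0 : Complex.reCLM (z ^ k / k) = (z ^ k / (k:ℂ)).re := rfl
    rw [h0, hzk, Complex.div_natCast_re, Complex.re_ofReal_mul,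
      Complex.exp_ofReal_mul_I_re]
  rw [funext hterm] at hre
  have hlog : (Complex.reCLM (-Complex.log (1 - z))) = - Real.log (‖1 - z‖) := by
    simp [Complex.log_re]
  rw [hlog] at hre
  have habs : Real.log (1 - 2 * r * Real.cos θ + r ^ 2)
      = 2 * Real.log ‖1 - z‖ := by
    have h1 : Complex.normSq (1 - z) = 1 - 2 * r * Real.cos θ + r ^ 2 := by
      have hre' : (1 - z).re = 1 - r * Real.cos θ := by
        simp [hz, Complex.exp_ofReal_mul_I_re]
      have him' : (1 - z).im = -(r * Real.sin θ) := by
        simp [hz, Complex.exp_ofReal_mul_I_im]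
      rw [Complex.normSq_apply, hre', him']
      nlinarith [Real.sin_sq_add_cos_sq θ]
    rw [← h1, ← Complex.sq_norm, Real.log_pow]
    push_cast; ring
  have h2 := (hre.mul_left (-2)).tsum_eq
  rw [habs, h2]
  ring

lemma key_integral (n : ℕ) (hn : 1 ≤ n) {r : ℝ} (hr0 : 0 ≤ r) (hr1 : r < 1) :
    ∫ θ in (0:ℝ)..π, Real.log (1 - 2 * r * Real.cos θ + r ^ 2) * Real.cos (n * θ)
      = -(π * r ^ n / n) := by
  set F : ℕ → ℝ → ℝ := fun k θ => (-2) * (r ^ k * Real.cos (k * θ) / k) * Real.cos (n * θ)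
    with hF
  have hFcont : ∀ k, Continuous (F k) := by
    intro k
    apply Continuous.mul
    · exact continuous_const.mul (((continuous_const.mul
        ((Real.continuous_cos.comp (continuous_const.mul continuous_id)))).div_const _))
    · exact Real.continuous_cos.comp (continuous_const.mul continuous_id)
  have hFbound : ∀ k θ, ‖F k θ‖ ≤ 2 * r ^ k := by
    intro k θ
    rcases Nat.eq_zero_or_pos k with rfl | hk
    · simp [hF]
    · have h1 : |Real.cos (k * θ)| ≤ 1 := Real.abs_cos_le_one _
      have h2 : |Real.cos (n * θ)| ≤ 1 := Real.abs_cos_le_one _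
      have hrk : 0 ≤ r ^ k := pow_nonneg hr0 k
      have hk1 : (1:ℝ) ≤ k := by exact_mod_cast hk
      rw [hF]
      simp only [Real.norm_eq_abs, abs_mul, abs_div, abs_neg, abs_two, abs_pow,
        abs_of_nonneg hr0, Nat.abs_cast]
      have hA : 0 ≤ r ^ k * |Real.cos (k * θ)| / k := by positivity
      have hd : r ^ k * |Real.cos (k * θ)| / k ≤ r ^ k := by
        rw [div_le_iff₀ (by positivity)]
        nlinarith
      nlinarith [abs_nonneg (Real.cos (n * θ))]
  have hpt : ∀ θ : ℝ, Real.log (1 - 2 * r * Real.cos θ + r ^ 2) * Real.cos (n * θ)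
      = ∑' k, F k θ := by
    intro θ
    rw [log_Q_eq_tsum hr0 hr1 θ, ← tsum_mul_right]
  have hle : (0:ℝ) ≤ π := pi_pos.le
  rw [intervalIntegral.integral_of_le hle]
  simp_rw [hpt]
  rw [← MeasureTheory.integral_tsum_of_summable_integral_norm]
  · have hFk : ∀ k, ∫ θ in Set.Ioc (0:ℝ) π, F k θ
        = (-2) * (r ^ k / k) * (if k = n then π / 2 else 0) := by
      intro k
      rw [← intervalIntegral.integral_of_le hle]
      have h3 : ∀ θ, F k θ = ((-2) * (r ^ k / k)) * (Real.cos (k * θ) * Real.cos (n * θ)) := by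
        intro θ; rw [hF]; ring
      simp_rw [h3]
      rw [intervalIntegral.integral_const_mul, orth k n hn]
    simp_rw [hFk]
    rw [tsum_eq_single n]
    · rw [if_pos rfl]
      have hn0 : (n:ℝ) ≠ 0 := by positivity
      field_simp
    · intro k hk
      rw [if_neg hk, mul_zero]
  · exact fun k => (hFcont k).integrableOn_Ioc
  · apply Summable.of_nonneg_of_le (fun k => MeasureTheory.integral_nonneg fun θ => norm_nonneg _)
      (fun k => ?_) (((summable_geometric_of_lt_one hr0 hr1).mul_left (2 * π)))
    calc ∫ θ in Set.Ioc (0:ℝ) π, ‖F k θ‖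
        ≤ ∫ _ in Set.Ioc (0:ℝ) π, 2 * r ^ k := by
          apply MeasureTheory.integral_mono_of_nonneg
          · exact Filter.Eventually.of_forall fun θ => norm_nonneg _
          · exact continuous_const.integrableOn_Ioc
          · exact Filter.Eventually.of_forall fun θ => hFbound k θ
      _ = 2 * π * r ^ k := by
          rw [MeasureTheory.setIntegral_const]
          simp only [MeasureTheory.measureReal_def, Real.volume_Ioc, sub_zero, smul_eq_mul, ENNReal.toReal_ofReal hle]
          ring

/-- The `n ≥ 1` azimuthal Fourier cosine modes of the kernel `log (2/|x-x'|)` on the sphere: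
`(1/π) ∫₀^π log(2/|x-x'|) cos(nθ) dθ = (tan(t₁/2) cot(t₂/2))ⁿ / (2n)`. -/
theorem log_kernel_mode_pos (n : ℕ) (hn : 1 ≤ n) (t₁ t₂ : ℝ)
    (h0 : 0 < t₁) (h12 : t₁ < t₂) (h2 : t₂ < π) :
    (1 / π) * ∫ θ in (0:ℝ)..π,
        Real.log (2 / Real.sqrt (2 * (1 - Real.cos t₁ * Real.cos t₂
          - Real.sin t₁ * Real.sin t₂ * Real.cos θ))) * Real.cos (n * θ)
      = (1 / (2 * n)) * (Real.tan (t₁ / 2) * Real.cot (t₂ / 2)) ^ n := by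
  have hpi := Real.pi_pos
  set s₁ := Real.sin (t₁ / 2) with hs1def
  set c₁ := Real.cos (t₁ / 2) with hc1def
  set s₂ := Real.sin (t₂ / 2) with hs2def
  set c₂ := Real.cos (t₂ / 2) with hc2def
  have hs₁ : 0 < s₁ := Real.sin_pos_of_pos_of_lt_pi (by linarith) (by linarith)
  have hc₁ : 0 < c₁ := Real.cos_pos_of_mem_Ioo ⟨by linarith, by linarith⟩
  have hs₂ : 0 < s₂ := Real.sin_pos_of_pos_of_lt_pi (by linarith) (by linarith)
  have hc₂ : 0 < c₂ := Real.cos_pos_of_mem_Ioo ⟨by linarith, by linarith⟩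
  set r := Real.tan (t₁ / 2) * Real.cot (t₂ / 2) with hrdef
  have hr : r = s₁ * c₂ / (c₁ * s₂) := by
    rw [hrdef, Real.tan_eq_sin_div_cos, Real.cot_eq_cos_div_sin]
    rw [div_mul_div_comm]
  have hsin_sub : 0 < Real.sin (t₂ / 2 - t₁ / 2) :=
    Real.sin_pos_of_pos_of_lt_pi (by linarith) (by linarith)
  have hdiff : s₁ * c₂ < c₁ * s₂ := by
    rw [Real.sin_sub] at hsin_sub
    nlinarith
  have hr0 : 0 ≤ r := by rw [hr]; positivity
  have hr1 : r < 1 := by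
    rw [hr, div_lt_one (by positivity)]; linarith
  set c := 2 * c₁ * s₂ with hcdef
  have hcpos : 0 < c := by positivity
  have hident : ∀ θ : ℝ,
      2 * (1 - Real.cos t₁ * Real.cos t₂ - Real.sin t₁ * Real.sin t₂ * Real.cos θ)
        = c ^ 2 * (1 - 2 * r * Real.cos θ + r ^ 2) := by
    intro θ
    have e1 : Real.cos t₁ = 2 * c₁ ^ 2 - 1 := by
      rw [show t₁ = 2 * (t₁ / 2) by ring, Real.cos_two_mul]
    have e2 : Real.cos t₂ = 2 * c₂ ^ 2 - 1 := by
      rw [show t₂ = 2 * (t₂ / 2) by ring, Real.cos_two_mul]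
    have e3 : Real.sin t₁ = 2 * s₁ * c₁ := by
      rw [show t₁ = 2 * (t₁ / 2) by ring, Real.sin_two_mul]
    have e4 : Real.sin t₂ = 2 * s₂ * c₂ := by
      rw [show t₂ = 2 * (t₂ / 2) by ring, Real.sin_two_mul]
    have p1 : s₁ ^ 2 + c₁ ^ 2 = 1 := Real.sin_sq_add_cos_sq _
    have p2 : s₂ ^ 2 + c₂ ^ 2 = 1 := Real.sin_sq_add_cos_sq _
    have hcr : c * r = 2 * s₁ * c₂ := by
      rw [hr, hcdef]; field_simp
    have expand : c ^ 2 * (1 - 2 * r * Real.cos θ + r ^ 2)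
        = c ^ 2 - 2 * c * (c * r) * Real.cos θ + (c * r) ^ 2 := by ring
    rw [expand, hcr, hcdef, e1, e2, e3, e4]
    linear_combination (-4 * c₂ ^ 2) * p1 + (-4 * c₁ ^ 2) * p2
  have hQpos : ∀ θ : ℝ, 0 < 1 - 2 * r * Real.cos θ + r ^ 2 := Qpos hr0 hr1
  have hlogdec : ∀ θ : ℝ,
      Real.log (2 / Real.sqrt (2 * (1 - Real.cos t₁ * Real.cos t₂
          - Real.sin t₁ * Real.sin t₂ * Real.cos θ)))
        = (Real.log 2 - Real.log c) - (1 / 2) * Real.log (1 - 2 * r * Real.cos θ + r ^ 2) := by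
    intro θ
    rw [hident θ, Real.sqrt_mul (sq_nonneg c), Real.sqrt_sq hcpos.le,
      Real.log_div two_ne_zero (mul_pos hcpos (Real.sqrt_pos.mpr (hQpos θ))).ne',
      Real.log_mul hcpos.ne' (Real.sqrt_pos.mpr (hQpos θ)).ne',
      Real.log_sqrt (hQpos θ).le]
    ring
  have hsplit : ∀ θ : ℝ,
      ((Real.log 2 - Real.log c) - (1 / 2) * Real.log (1 - 2 * r * Real.cos θ + r ^ 2))
          * Real.cos (n * θ)
        = (Real.log 2 - Real.log c) * Real.cos (n * θ)
          - (1 / 2) * (Real.log (1 - 2 * r * Real.cos θ + r ^ 2) * Real.cos (n * θ)) := by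
    intro θ; ring
  have hQc : Continuous fun θ : ℝ => 1 - 2 * r * Real.cos θ + r ^ 2 :=
    (continuous_const.sub (continuous_const.mul Real.continuous_cos)).add continuous_const
  have hcosn : Continuous fun θ : ℝ => Real.cos (n * θ) :=
    Real.continuous_cos.comp (continuous_const.mul continuous_id)
  have hint1 : IntervalIntegrable (fun θ : ℝ => (Real.log 2 - Real.log c) * Real.cos (n * θ))
      MeasureTheory.volume 0 π := (continuous_const.mul hcosn).intervalIntegrable _ _
  have hint2 : IntervalIntegrable
      (fun θ : ℝ => (1 / 2) * (Real.log (1 - 2 * r * Real.cos θ + r ^ 2) * Real.cos (n * θ)))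
      MeasureTheory.volume 0 π := by
    exact (continuous_const.mul ((hQc.log fun θ => (hQpos θ).ne').mul hcosn)).intervalIntegrable _ _
  simp_rw [hlogdec, hsplit]
  rw [intervalIntegral.integral_sub hint1 hint2, intervalIntegral.integral_const_mul,
    intervalIntegral.integral_const_mul, int_cos_nat n (by omega),
    key_integral n hn hr0 hr1]
  have hn0 : (n:ℝ) ≠ 0 := by positivity
  field_simp
  ring
end
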